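/- Let x(t) solve x' = Ax + bf, x(0)=0 and y(t) solve y' = A*y + dg, y(0)=0, with outputs z(t) = ⟨x(t), d⟩ and w(t) = ⟨y(t), b⟩. Then the connecting operator C^T defined by ⟨C^T f, g⟩_{L²(0,T)} = ⟨x(T), y(T)⟩_H admits the representation (C^T f)(t) = ∫_0^T r(2T − t − τ) f(τ) dτ, where r is the response kernel satisfying z(t) = ∫_0^t r(t−τ) f(τ) dτ. -/

import Mathlib

open NormedSpace MeasureTheory intervalIntegral ContinuousLinearMap

section aux

variable {H : Type*} [NormedAddCommGroup H] [NormedSpace ℂ H] [CompleteSpace H]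

lemma exp_hasDerivAt (B : H →L[ℂ] H) (s : ℝ) :
    HasDerivAt (fun u : ℝ => exp (u • B)) (exp (s • B) * B) s :=
  hasDerivAt_exp_smul_const B s

lemma exp_cont (B : H →L[ℂ] H) : Continuous (fun u : ℝ => exp (u • B)) :=
  continuous_iff_continuousAt.mpr fun s => (exp_hasDerivAt B s).continuousAt

/-- Variation of constants. -/
lemma voc (B : H →L[ℂ] H) (b : H) (f : ℝ → ℂ) (hf : Continuous f)
    (x : ℝ → H) (hx0 : x 0 = 0)
    (hx : ∀ t : ℝ, HasDerivAt x (B (x t) + f t • b) t) (T : ℝ) :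
    x T = ∫ s in (0:ℝ)..T, f s • (exp ((T - s) • B)) b := by
  set e : ℝ → (H →L[ℂ] H) := fun s => exp (s • B) with he_def
  have he : ∀ s : ℝ, HasDerivAt e (e s * B) s := exp_hasDerivAt B
  set R : (H →L[ℂ] H) →L[ℝ] (H →L[ℝ] H) := restrictScalarsL ℂ H H ℝ ℝ with hR
  have hu : ∀ t : ℝ, HasDerivAt (fun t => R (e (T - t)) (x t)) (f t • e (T - t) b) t := by
    intro t
    have h1 : HasDerivAt (fun t : ℝ => e (T - t)) ((-1 : ℝ) • (e (T - t) * B)) t :=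
      (he (T - t)).scomp t (by simpa using (hasDerivAt_id t).const_sub T)
    have h2 : HasDerivAt (fun t : ℝ => R (e (T - t))) (R ((-1 : ℝ) • (e (T - t) * B))) t :=
      R.hasFDerivAt.comp_hasDerivAt t h1
    have h3 := h2.clm_apply (hx t)
    have key : R ((-1 : ℝ) • (e (T - t) * B)) (x t)
        + R (e (T - t)) (B (x t) + f t • b) = f t • e (T - t) b := by
      show (-1 : ℝ) • (e (T - t)) (B (x t))
          + (e (T - t)) (B (x t) + f t • b) = f t • e (T - t) b
      rw [map_add, (e (T - t)).map_smul]
      module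
    rwa [key] at h3
  have hcont : Continuous fun s : ℝ => f s • (e (T - s)) b :=
    hf.smul (((exp_cont B).comp (continuous_const.sub continuous_id)).clm_apply
      continuous_const)
  have hFTC := integral_eq_sub_of_hasDerivAt (f := fun t => R (e (T - t)) (x t))
    (f' := fun t => f t • e (T - t) b) (fun s _ => hu s) (hcont.intervalIntegrable 0 T)
  rw [show (∫ s in (0:ℝ)..T, f s • (exp ((T - s) • B)) b)
      = ∫ s in (0:ℝ)..T, f s • (e (T - s)) b from rfl, hFTC]
  show x T = e (T - T) (x T) - e (T - 0) (x 0)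
  simp [he_def, hx0, NormedSpace.exp_zero]

lemma conj_intervalIntegral (h : ℝ → ℂ) (a b : ℝ) :
    (starRingEnd ℂ) (∫ t in a..b, h t) = ∫ t in a..b, (starRingEnd ℂ) (h t) := by
  unfold intervalIntegral
  rw [map_sub, ← integral_conj, ← integral_conj]

end aux

theorem stmt15
    {H : Type*} [NormedAddCommGroup H] [InnerProductSpace ℂ H]
    [CompleteSpace H] [FiniteDimensional ℂ H]
    (A : H →L[ℂ] H) (b d : H) (T : ℝ) (hT : 0 < T)
    (f g : ℝ → ℂ) (hf : Continuous f) (hg : Continuous g)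
    (x y : ℝ → H) (hx0 : x 0 = 0) (hy0 : y 0 = 0)
    (hx : ∀ t : ℝ, HasDerivAt x (A (x t) + f t • b) t)
    (hy : ∀ t : ℝ, HasDerivAt y ((ContinuousLinearMap.adjoint A) (y t) + g t • d) t)
    (r : ℝ → ℂ)
    (hr : ∀ t : ℝ, r t = (inner ℂ d ((NormedSpace.exp ((t : ℂ) • A)) b) : ℂ))
    (z : ℝ → ℂ) (hz : ∀ t : ℝ, z t = (inner ℂ d (x t) : ℂ))
    (hzr : ∀ t ∈ Set.Icc (0:ℝ) T, z t = ∫ τ in (0:ℝ)..t, r (t - τ) * f τ) :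
    (∫ t in (0:ℝ)..T,
        (∫ τ in (0:ℝ)..T, r (2 * T - t - τ) * f τ) * (starRingEnd ℂ) (g t))
      = (inner ℂ (y T) (x T) : ℂ) := by
  set e : ℝ → (H →L[ℂ] H) := fun s => exp (s • A) with he_def
  have hre : ∀ t : ℝ, r t = (inner ℂ d (e t b) : ℂ) := by
    intro t
    rw [hr t, he_def]
    rw [show ((t : ℂ) • A) = t • A from Complex.coe_smul t A]
  have hstar : ∀ s : ℝ, exp (s • (ContinuousLinearMap.adjoint A)) = star (e s) := by
    intro s
    rw [he_def, star_exp, star_smul, star_trivial, ContinuousLinearMap.star_eq_adjoint]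
  have hxT : x T = ∫ s in (0:ℝ)..T, f s • (e (T - s)) b := voc A b f hf x hx0 hx T
  have hyT : y T = ∫ s in (0:ℝ)..T, g s • (star (e (T - s))) d := by
    rw [voc (ContinuousLinearMap.adjoint A) d g hg y hy0 hy T]
    simp_rw [hstar]
  have hecont : Continuous e := exp_cont A
  have heTs : Continuous fun s : ℝ => e (T - s) :=
    hecont.comp (continuous_const.sub continuous_id)
  have hsum : ∀ s τ : ℝ, e (T - s) ((e (T - τ)) b) = e (2 * T - s - τ) b := by
    intro s τ
    have hmul : e (T - s) * e (T - τ) = e (2 * T - s - τ) := by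
      rw [he_def]
      show exp ((T - s) • A) * exp ((T - τ) • A) = _
      let +nondep : NormedAlgebra ℚ (H →L[ℂ] H) := .restrictScalars ℚ ℂ (H →L[ℂ] H)
      rw [← NormedSpace.exp_add_of_commute (((Commute.refl A).smul_left _).smul_right _),
        ← add_smul]
      ring_nf
    calc e (T - s) ((e (T - τ)) b) = (e (T - s) * e (T - τ)) b := rfl
      _ = e (2 * T - s - τ) b := by rw [hmul]
  have hinner : ∀ s : ℝ, (inner ℂ d ((e (T - s)) (x T)) : ℂ)
      = ∫ τ in (0:ℝ)..T, r (2 * T - s - τ) * f τ := by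
    intro s
    have hint : IntervalIntegrable (fun τ => f τ • (e (T - τ)) b) volume 0 T :=
      (hf.smul (heTs.clm_apply continuous_const)).intervalIntegrable 0 T
    have expand : (e (T - s)) (x T) = ∫ τ in (0:ℝ)..T, f τ • e (2 * T - s - τ) b := by
      rw [hxT, ← (e (T - s)).intervalIntegral_comp_comm hint]
      apply intervalIntegral.integral_congr
      intro τ _
      show (e (T - s)) (f τ • (e (T - τ)) b) = f τ • (e (2 * T - s - τ)) b
      rw [(e (T - s)).map_smul, hsum s τ]
    rw [expand]
    have hint3 : IntervalIntegrable (fun τ => f τ • e (2 * T - s - τ) b) volume 0 T := by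
      apply Continuous.intervalIntegrable
      exact hf.smul ((hecont.comp (by continuity)).clm_apply continuous_const)
    rw [show (inner ℂ d (∫ τ in (0:ℝ)..T, f τ • e (2 * T - s - τ) b) : ℂ)
        = (innerSL ℂ d) (∫ τ in (0:ℝ)..T, f τ • e (2 * T - s - τ) b) from rfl]
    rw [← (innerSL ℂ d).intervalIntegral_comp_comm hint3]
    apply intervalIntegral.integral_congr
    intro τ _
    show (innerSL ℂ d) (f τ • (e (2 * T - s - τ)) b) = r (2 * T - s - τ) * f τ
    rw [innerSL_apply_apply, inner_smul_right, hre (2 * T - s - τ), mul_comm]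
  have hmain : (inner ℂ (y T) (x T) : ℂ)
      = ∫ s in (0:ℝ)..T, (starRingEnd ℂ) (g s) * (inner ℂ d ((e (T - s)) (x T)) : ℂ) := by
    rw [← inner_conj_symm (y T) (x T), hyT]
    have hint : IntervalIntegrable (fun s => g s • (star (e (T - s))) d) volume 0 T := by
      apply Continuous.intervalIntegrable
      exact hg.smul ((continuous_star.comp heTs).clm_apply continuous_const)
    rw [show (inner ℂ (x T) (∫ s in (0:ℝ)..T, g s • (star (e (T - s))) d) : ℂ)
        = (innerSL ℂ (x T)) (∫ s in (0:ℝ)..T, g s • (star (e (T - s))) d) from rfl]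
    rw [← (innerSL ℂ (x T)).intervalIntegral_comp_comm hint, conj_intervalIntegral]
    apply intervalIntegral.integral_congr
    intro s _
    show (starRingEnd ℂ) ((innerSL ℂ (x T)) (g s • (star (e (T - s))) d))
        = (starRingEnd ℂ) (g s) * (inner ℂ d ((e (T - s)) (x T)) : ℂ)
    rw [innerSL_apply_apply, inner_smul_right, map_mul]
    congr 1
    rw [ContinuousLinearMap.star_eq_adjoint, ContinuousLinearMap.adjoint_inner_right,
      inner_conj_symm]
  rw [hmain]
  apply intervalIntegral.integral_congr
  intro t _
  show (∫ τ in (0:ℝ)..T, r (2 * T - t - τ) * f τ) * (starRingEnd ℂ) (g t)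
      = (starRingEnd ℂ) (g t) * (inner ℂ d ((e (T - t)) (x T)) : ℂ)
  rw [hinner t, mul_comm]
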